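/- Let (g, t) be a construction with decomposition D. Given the leaf construction-sequence lcs(D) = [(g1, t1),…,(gn, tn)], it holds that Ft(g, t) = Ft(g1, t1) ⊕ ⋯ ⊕ Ft(gn, tn). -/

import Mathlib

namespace RST

/-! ## Type systems -/

/-- A relation (given as a set of pairs) is a partial order on the set `Ty`. -/
def IsPartialOrderOn {U : Type*} (Ty : Set U) (le : Set (U × U)) : Prop :=
  (∀ p ∈ le, p.1 ∈ Ty ∧ p.2 ∈ Ty) ∧
  (∀ τ ∈ Ty, (τ, τ) ∈ le) ∧
  (∀ a b : U, (a, b) ∈ le → (b, a) ∈ le → a = b) ∧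
  (∀ a b c : U, (a, b) ∈ le → (b, c) ∈ le → (a, c) ∈ le)

/-- The subtype closure of `Ty'` in the type system `(Ty, le)`. -/
def subtypeClosure {U : Type*} (Ty : Set U) (le : Set (U × U)) (Ty' : Set U) : Set U :=
  {τ | τ ∈ Ty ∧ ∃ τ' ∈ Ty', (τ, τ') ∈ le}

/-- The set of all subtype closures of subsets of `Ty`. -/
def SC {U : Type*} (Ty : Set U) (le : Set (U × U)) : Set (Set U) :=
  {S | ∃ Ty' ⊆ Ty, S = subtypeClosure Ty le Ty'}

/-- The candidate order of an upper bound extension: the reflexive closure (on `Ty ∪ Tystar`)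
of `le` together with the pairs `(τ, f S)` for `τ ∈ S ∈ SC Ty le`. -/
def upperBoundRel {U : Type*} (Ty Tystar : Set U) (le : Set (U × U)) (f : Set U → U) :
    Set (U × U) :=
  (le ∪ {p : U × U | ∃ S ∈ SC Ty le, p.1 ∈ S ∧ p.2 = f S}) ∪
    {p : U × U | p.1 = p.2 ∧ p.1 ∈ Ty ∪ Tystar}

/-! ## Graphs -/

/-- A (raw) directed labelled bipartite graph: tokens `Tk`, configurators `Cf`, arrows `Arr`,
incidence, arrow indices and vertex labels all given relationally (as sets of pairs), so that
unions of graphs are componentwise unions. -/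
structure PreGraph (V A L : Type*) where
  Tk : Set V
  Cf : Set V
  Arr : Set A
  inc : Set (A × (V × V))
  ia : Set (A × ℕ)
  tl : Set (V × L)
  cl : Set (V × L)

variable {V A L : Type*}

instance : Union (PreGraph V A L) :=
  ⟨fun g h =>
    ⟨g.Tk ∪ h.Tk, g.Cf ∪ h.Cf, g.Arr ∪ h.Arr, g.inc ∪ h.inc, g.ia ∪ h.ia,
      g.tl ∪ h.tl, g.cl ∪ h.cl⟩⟩

def PreGraph.Subgraph (h g : PreGraph V A L) : Prop :=
  h.Tk ⊆ g.Tk ∧ h.Cf ⊆ g.Cf ∧ h.Arr ⊆ g.Arr ∧ h.inc ⊆ g.inc ∧ h.ia ⊆ g.ia ∧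
    h.tl ⊆ g.tl ∧ h.cl ⊆ g.cl

/-- The vertices adjacent to `u` (together with `u`). -/
def PreGraph.adjTo (g : PreGraph V A L) (u : V) : Set V :=
  {u} ∪ {v | ∃ a ∈ g.Arr, (a, (v, u)) ∈ g.inc ∨ (a, (u, v)) ∈ g.inc}

/-- The arrows incident to `u`. -/
def PreGraph.incidentArrows (g : PreGraph V A L) (u : V) : Set A :=
  {a | a ∈ g.Arr ∧ ∃ v, (a, (v, u)) ∈ g.inc ∨ (a, (u, v)) ∈ g.inc}

/-- The restriction of a graph to given vertex and arrow sets. -/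
def PreGraph.restrict (g : PreGraph V A L) (Vs : Set V) (As : Set A) : PreGraph V A L :=
  ⟨g.Tk ∩ Vs, g.Cf ∩ Vs, g.Arr ∩ As, {q | q ∈ g.inc ∧ q.1 ∈ As},
    {q | q ∈ g.ia ∧ q.1 ∈ As}, {q | q ∈ g.tl ∧ q.1 ∈ Vs}, {q | q ∈ g.cl ∧ q.1 ∈ Vs}⟩

/-- The neighbourhood of a vertex `u`. -/
def PreGraph.Nh (g : PreGraph V A L) (u : V) : PreGraph V A L :=
  g.restrict (g.adjTo u) (g.incidentArrows u)

/-- A set of pairs is (the graph of) a function with domain `D`. -/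
def IsFunctionOn {α β : Type*} (R : Set (α × β)) (D : Set α) : Prop :=
  (∀ p ∈ R, p.1 ∈ D) ∧ ∀ x ∈ D, ∃! y, (x, y) ∈ R

/-- A raw graph is a genuine directed labelled bipartite graph. -/
def IsGraph (g : PreGraph V A L) : Prop :=
  Disjoint g.Tk g.Cf ∧
  IsFunctionOn g.inc g.Arr ∧
  (∀ a v w, (a, (v, w)) ∈ g.inc → (v ∈ g.Tk ∧ w ∈ g.Cf) ∨ (v ∈ g.Cf ∧ w ∈ g.Tk)) ∧
  IsFunctionOn g.ia g.Arr ∧ IsFunctionOn g.tl g.Tk ∧ IsFunctionOn g.cl g.Cf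

/-- `ars` is the list of incoming arrows of `u`, listed in increasing index order
(the arrow at position `i` carries index `i+1`). -/
def InArrowSeq (g : PreGraph V A L) (u : V) (ars : List A) : Prop :=
  ars.Nodup ∧ (∀ a : A, a ∈ ars ↔ a ∈ g.Arr ∧ ∃ w, (a, (w, u)) ∈ g.inc) ∧
  ∀ (i : ℕ) (a : A), ars[i]? = some a → (a, i + 1) ∈ g.ia

/-- `t` is an output token of the configurator `u`. -/
def OutputTok (g : PreGraph V A L) (u t : V) : Prop :=
  ∃ a ∈ g.Arr, (a, (u, t)) ∈ g.inc

/-- `ts` is the input token-sequence of the configurator `u`. -/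
def InputTokSeq (g : PreGraph V A L) (u : V) (ts : List V) : Prop :=
  ∃ ars : List A, InArrowSeq g u ars ∧
    List.Forall₂ (fun a v => (a, (v, u)) ∈ g.inc) ars ts

/-- `τs` is the input type-sequence of the configurator `u`. -/
def InputTypeSeq (g : PreGraph V A L) (u : V) (τs : List L) : Prop :=
  ∃ ts : List V, InputTokSeq g u ts ∧ List.Forall₂ (fun v τ => (v, τ) ∈ g.tl) ts τs

/-- `g` is a configuration of the constructor `c` (with signature `(ins, out)`),
whose single configurator is `u`. -/
def IsConfiguration (le : Set (L × L)) (g : PreGraph V A L) (u : V) (c : L)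
    (ins : List L) (out : L) : Prop :=
  IsGraph g ∧ g.Cf = {u} ∧ (u, c) ∈ g.cl ∧
  g.Tk = {v | ∃ a ∈ g.Arr, (a, (v, u)) ∈ g.inc ∨ (a, (u, v)) ∈ g.inc} ∧
  (∃! a0 : A, a0 ∈ g.Arr ∧ ∃ w, (a0, (u, w)) ∈ g.inc) ∧
  (∀ a0 ∈ g.Arr, ∀ w : V, (a0, (u, w)) ∈ g.inc →
      (a0, 0) ∈ g.ia ∧ ∃ σ, (w, σ) ∈ g.tl ∧ (σ, out) ∈ le) ∧
  (∃ ars : List A, InArrowSeq g u ars ∧ ars.length = ins.length ∧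
    ∀ (i : ℕ) (a : A) (τ : L), ars[i]? = some a → ins[i]? = some τ →
      ∃ w σ, (a, (w, u)) ∈ g.inc ∧ (w, σ) ∈ g.tl ∧ (σ, τ) ∈ le)

/-- A structure graph for the constructor specification `(C, sig)` over types `(Ty, le)`. -/
def IsStructureGraph (Ty : Set L) (le : Set (L × L)) (C : Set L)
    (sig : Set (L × (List L × L))) (g : PreGraph V A L) : Prop :=
  IsGraph g ∧ (∀ x τ, (x, τ) ∈ g.tl → τ ∈ Ty) ∧
  ∀ u ∈ g.Cf, ∃ c ins out, (u, c) ∈ g.cl ∧ c ∈ C ∧ (c, (ins, out)) ∈ sig ∧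
    IsConfiguration le (g.Nh u) u c ins out

/-! ## Construction spaces -/

/-- The raw data of a construction space: a type system, a constructor specification and
a structure graph. -/
structure CSpace (V A L : Type*) where
  Ty : Set L
  le : Set (L × L)
  C : Set L
  sig : Set (L × (List L × L))
  G : PreGraph V A L

instance : Union (CSpace V A L) :=
  ⟨fun c d => ⟨c.Ty ∪ d.Ty, c.le ∪ d.le, c.C ∪ d.C, c.sig ∪ d.sig, c.G ∪ d.G⟩⟩

/-- The raw data forms a genuine construction space. -/
def IsCSpace (Cs : CSpace V A L) : Prop :=
  IsPartialOrderOn Cs.Ty Cs.le ∧ Disjoint Cs.C Cs.Ty ∧ IsFunctionOn Cs.sig Cs.C ∧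
  (∀ c ins out, (c, (ins, out)) ∈ Cs.sig →
      ins ≠ [] ∧ (∀ τ ∈ ins, τ ∈ Cs.Ty) ∧ out ∈ Cs.Ty) ∧
  IsStructureGraph Cs.Ty Cs.le Cs.C Cs.sig Cs.G

/-- Token-functionality of the constructors of a structure graph. -/
def TokenFunctional (g : PreGraph V A L) : Prop :=
  ∀ u u' c, u ∈ g.Cf → u' ∈ g.Cf → (u, c) ∈ g.cl → (u', c) ∈ g.cl →
    ∀ ts, InputTokSeq g u ts → InputTokSeq g u' ts →
      ∀ t t', OutputTok g u t → OutputTok g u' t' → t = t'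

/-- Type-functionality of the constructors of a structure graph. -/
def TypeFunctional (g : PreGraph V A L) : Prop :=
  ∀ u u' c, u ∈ g.Cf → u' ∈ g.Cf → (u, c) ∈ g.cl → (u', c) ∈ g.cl →
    ∀ τs, InputTypeSeq g u τs → InputTypeSeq g u' τs →
      ∀ t t' τ τ', OutputTok g u t → OutputTok g u' t' →
        (t, τ) ∈ g.tl → (t', τ') ∈ g.tl → τ = τ'

def IsFunctionalGraph (g : PreGraph V A L) : Prop :=
  TokenFunctional g ∧ TypeFunctional g

/-! ## Representational systems -/

/-- The raw data of a representational system: grammatical, entailment and identification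
spaces. -/
structure RSystem (V A L : Type*) where
  Gs : CSpace V A L
  Es : CSpace V A L
  Is : CSpace V A L

instance : Union (RSystem V A L) :=
  ⟨fun r s => ⟨r.Gs ∪ s.Gs, r.Es ∪ s.Es, r.Is ∪ s.Is⟩⟩

/-- The universal space of a representational system. -/
def RSystem.uspace (R : RSystem V A L) : CSpace V A L := (R.Gs ∪ R.Es) ∪ R.Is

/-- `R` is a representational system formed over the type system `(Ty, le)` and the
meta-type system `(MTy, Mle)`. -/
def IsRSystem (R : RSystem V A L) (Ty : Set L) (le : Set (L × L))
    (MTy : Set L) (Mle : Set (L × L)) : Prop :=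
  IsPartialOrderOn Ty le ∧ IsPartialOrderOn MTy Mle ∧
  IsPartialOrderOn (Ty ∪ MTy) (le ∪ Mle) ∧
  R.Gs.Ty = Ty ∧ R.Gs.le = le ∧ IsCSpace R.Gs ∧ IsFunctionalGraph R.Gs.G ∧
  R.Es.Ty = Ty ∧ R.Es.le = le ∧ IsCSpace R.Es ∧ R.Es.G.Tk ⊆ R.Gs.G.Tk ∧
  R.Is.Ty = Ty ∪ MTy ∧ R.Is.le = le ∪ Mle ∧ IsCSpace R.Is ∧
  (∀ x ∈ R.Is.G.Tk, x ∉ R.Gs.G.Tk → ∃ τ ∈ MTy, (x, τ) ∈ R.Is.G.tl) ∧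
  (∀ x ∈ R.Is.G.Tk, (∃ u ∈ R.Is.G.Cf, OutputTok R.Is.G u x) → x ∉ R.Gs.G.Tk) ∧
  IsCSpace (R.Gs ∪ R.Es) ∧ IsCSpace (R.Gs ∪ R.Is) ∧ IsCSpace (R.Es ∪ R.Is) ∧
  Disjoint R.Gs.C R.Es.C ∧ Disjoint R.Gs.C R.Is.C ∧ Disjoint R.Es.C R.Is.C

/-- `(R, R', Is'')` is an inter-representational-system encoding, where `R` is formed over
`(Ty, le)` and `(MTy, Mle)`, `R'` over `(Ty', le')` and `(MTy', Mle')`, and `Is''` is an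
identification space formed over `(Ty ∪ Ty', le ∪ le')` and `(MTy'', Mle'')`. -/
def IsIRSE (R R' : RSystem V A L) (Is'' : CSpace V A L)
    (Ty : Set L) (le : Set (L × L)) (MTy : Set L) (Mle : Set (L × L))
    (Ty' : Set L) (le' : Set (L × L)) (MTy' : Set L) (Mle' : Set (L × L))
    (MTy'' : Set L) (Mle'' : Set (L × L)) : Prop :=
  IsRSystem R Ty le MTy Mle ∧ IsRSystem R' Ty' le' MTy' Mle' ∧
  IsRSystem (R ∪ R') (Ty ∪ Ty') (le ∪ le') (MTy ∪ MTy') (Mle ∪ Mle') ∧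
  IsPartialOrderOn MTy'' Mle'' ∧
  IsPartialOrderOn ((Ty ∪ Ty') ∪ MTy'') ((le ∪ le') ∪ Mle'') ∧
  Is''.Ty = (Ty ∪ Ty') ∪ MTy'' ∧ Is''.le = (le ∪ le') ∪ Mle'' ∧ IsCSpace Is'' ∧
  MTy ∪ MTy' ⊆ MTy'' ∧ Mle ∪ Mle' ⊆ Mle'' ∧
  (∀ x ∈ Is''.G.Tk, x ∉ (R.Gs ∪ R'.Gs).G.Tk → ∃ τ ∈ MTy'', (x, τ) ∈ Is''.G.tl) ∧
  (∀ x ∈ Is''.G.Tk, (∃ u ∈ Is''.G.Cf, OutputTok Is''.G u x) →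
      x ∉ (R.Gs ∪ R'.Gs).G.Tk) ∧
  IsCSpace ((R.Gs ∪ R'.Gs) ∪ Is'') ∧ IsCSpace ((R.Es ∪ R'.Es) ∪ Is'') ∧
  IsCSpace ((R.Is ∪ R'.Is) ∪ Is'') ∧
  Disjoint Is''.C (R.Gs ∪ R'.Gs).C ∧ Disjoint Is''.C (R.Es ∪ R'.Es).C ∧
  Disjoint Is''.C (R.Is ∪ R'.Is).C

/-! ## Trails -/

/-- A trail candidate: a list of arrows together with an associated source and target vertex
(needed for the empty trail `[]_v`). -/
structure Trail (V A : Type*) where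
  arrows : List A
  src : V
  tgt : V

/-- The empty trail `[]_v`. -/
def Trail.nil {V A : Type*} (v : V) : Trail V A := ⟨[], v, v⟩

/-- Concatenation `e ⊕ w` of trails. -/
def Trail.append {V A : Type*} (e w : Trail V A) : Trail V A :=
  ⟨e.arrows ++ w.arrows, e.src, w.tgt⟩

/-- The image of a trail under vertex/arrow maps. -/
def Trail.map {V A : Type*} (fv : V → V) (fa : A → A) (tr : Trail V A) : Trail V A :=
  ⟨tr.arrows.map fa, fv tr.src, fv tr.tgt⟩

/-- The arrows chain through the graph from `s` to `t`. -/
def ChainIn (g : PreGraph V A L) : List A → V → V → Prop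
  | [], s, t => s = t
  | a :: rest, s, t => a ∈ g.Arr ∧ ∃ m, (a, (s, m)) ∈ g.inc ∧ ChainIn g rest m t

/-- `tr` is a trail in `g`. -/
def IsTrailIn (g : PreGraph V A L) (tr : Trail V A) : Prop :=
  tr.arrows.Nodup ∧ ChainIn g tr.arrows tr.src tr.tgt ∧
  tr.src ∈ g.Tk ∪ g.Cf ∧ tr.tgt ∈ g.Tk ∪ g.Cf

/-- A trail is well-formed provided its source and target are tokens. -/
def WellFormed (g : PreGraph V A L) (tr : Trail V A) : Prop :=
  tr.src ∈ g.Tk ∧ tr.tgt ∈ g.Tk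

/-- `tr` is (source-)extendable by the arrow `a`. -/
def ExtendableBy (g : PreGraph V A L) (tr : Trail V A) (a : A) : Prop :=
  a ∈ g.Arr ∧ a ∉ tr.arrows ∧ ∃ s, (a, (s, tr.src)) ∈ g.inc

def Extendable (g : PreGraph V A L) (tr : Trail V A) : Prop :=
  ∃ a, ExtendableBy g tr a

def NonExtendable (g : PreGraph V A L) (tr : Trail V A) : Prop :=
  ¬ Extendable g tr

/-- `TES g tr S` holds iff `S` is the trail extension sequence of the trail `tr` in `g`,
following the recursive definition of TES. -/
inductive TES (g : PreGraph V A L) : Trail V A → List (Trail V A) → Prop where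
  | nonext (tr : Trail V A) (h : NonExtendable g tr) :
      TES g tr [⟨[], tr.src, tr.src⟩]
  | ext (tr : Trail V A) (a : A) (u : V) (ars : List A)
      (Ss : List (List (Trail V A)))
      (hext : ExtendableBy g tr a)
      (hinc : (a, (u, tr.src)) ∈ g.inc)
      (hars : InArrowSeq g u ars)
      (hlen : Ss.length = ars.length)
      (hrec : ∀ (i : ℕ) (ai : A) (si : V) (Si : List (Trail V A)),
          ars[i]? = some ai → Ss[i]? = some Si → (ai, (si, u)) ∈ g.inc →
          TES g ⟨ai :: a :: tr.arrows, si, tr.tgt⟩ Si) :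
      TES g tr (List.flatten (List.zipWith
        (fun (ai : A) (Si : List (Trail V A)) =>
          Si.map (fun e => (⟨e.arrows ++ [ai, a], e.src, tr.src⟩ : Trail V A)))
        ars Ss))

/-- The sequence of sources of a sequence of trails. -/
def srcSeq {V A : Type*} (S : List (Trail V A)) : List V := S.map Trail.src

/-- The right product `S ◁ w`, appending the trail `w` to each trail in `S`. -/
def rprod {V A : Type*} (S : List (Trail V A)) (w : Trail V A) : List (Trail V A) :=
  S.map fun e => e.append w

/-! ## Constructions -/

/-- Every token is the target of at most one arrow. -/
def UniStructured (g : PreGraph V A L) : Prop :=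
  ∀ x ∈ g.Tk, ∀ a ∈ g.Arr, ∀ b ∈ g.Arr,
    (∃ w, (a, (w, x)) ∈ g.inc) → (∃ w, (b, (w, x)) ∈ g.inc) → a = b

/-- `(g, t)` is a construction in the construction space `Cs`: `g` is a finite uni-structured
structure graph (a subgraph of the structure graph of `Cs`), `t` is a token of `g`, and every
vertex of `g` is the source of a trail targeting `t`. -/
def IsConstruction (Cs : CSpace V A L) (g : PreGraph V A L) (t : V) : Prop :=
  g.Subgraph Cs.G ∧ IsStructureGraph Cs.Ty Cs.le Cs.C Cs.sig g ∧
  g.Tk.Finite ∧ g.Cf.Finite ∧ g.Arr.Finite ∧ UniStructured g ∧ t ∈ g.Tk ∧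
  ∀ v ∈ g.Tk ∪ g.Cf, ∃ tr : Trail V A, IsTrailIn g tr ∧ tr.src = v ∧ tr.tgt = t

/-- `(g, t)` is a construction *in* `Cs` in the strong sense: moreover every configurator of `g`
has its full neighbourhood from the structure graph of `Cs`. -/
def IsConstructionIn (Cs : CSpace V A L) (g : PreGraph V A L) (t : V) : Prop :=
  IsConstruction Cs g t ∧ ∀ u ∈ g.Cf, g.Nh u = Cs.G.Nh u

/-- A trivial construction: the construct is its only vertex. -/
def TrivialC (g : PreGraph V A L) (t : V) : Prop := g.Tk ∪ g.Cf = {t}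

/-- A basic construction: exactly one configurator. -/
def BasicC (g : PreGraph V A L) : Prop := ∃ u, g.Cf = {u}

/-- The set of arrows occurring in a sequence of trails. -/
def trailArrowSet {V A : Type*} (TR : List (Trail V A)) : Set A :=
  {a | ∃ tr ∈ TR, a ∈ tr.arrows}

/-- The vertices of the `TR`-graph: vertices incident to arrows of trails of `TR`,
together with the associated vertex of any empty trail of `TR`. -/
def trailVertexSet (g : PreGraph V A L) (TR : List (Trail V A)) : Set V :=
  {v | (∃ a ∈ trailArrowSet TR, ∃ w, (a, (v, w)) ∈ g.inc ∨ (a, (w, v)) ∈ g.inc) ∨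
    ∃ tr ∈ TR, tr.arrows = [] ∧ tr.src = v}

/-- The `TR`-graph `v(TR)`. -/
def trGraph (g : PreGraph V A L) (TR : List (Trail V A)) : PreGraph V A L :=
  g.restrict (trailVertexSet g TR) (trailArrowSet TR)

/-- `((g', t), ics)` is a split of the construction `(g, t)`: `(g', t)` is a generator and
`ics` is the corresponding induced construction sequence (each induced construction is
`(v(TES(tri)), source(tri))`, the TES being computed in `(g, t)`). -/
def IsSplit (Cs : CSpace V A L) (g : PreGraph V A L) (t : V)
    (g' : PreGraph V A L) (ics : List (PreGraph V A L × V)) : Prop :=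
  IsConstruction Cs g' t ∧ g'.Subgraph g ∧
  ∃ trs : List (Trail V A), TES g' (Trail.nil t) trs ∧ ics.length = trs.length ∧
    ∀ (i : ℕ) (tri : Trail V A), trs[i]? = some tri →
      ∃ Si : List (Trail V A), TES g tri Si ∧ ics[i]? = some (trGraph g Si, tri.src)

/-! ## Decompositions -/

/-- A decomposition tree: vertices labelled by a graph and a token, with the incoming arrows
of every vertex given in index order by a list of subtrees. -/
inductive DTree (V A L : Type*) where
  | node : PreGraph V A L → V → List (DTree V A L) → DTree V A L

def DTree.rootGraph : DTree V A L → PreGraph V A L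
  | .node g _ _ => g

def DTree.rootTok : DTree V A L → V
  | .node _ t _ => t

def DTree.kids : DTree V A L → List (DTree V A L)
  | .node _ _ cs => cs

/-- `IsDecompositionOf Cs D g t` holds iff `D` is a decomposition of the construction
`(g, t)` in `Cs`. -/
inductive IsDecompositionOf (Cs : CSpace V A L) : DTree V A L → PreGraph V A L → V → Prop where
  | single (g : PreGraph V A L) (t : V) (h : IsConstruction Cs g t) :
      IsDecompositionOf Cs (.node g t []) g t
  | split (g : PreGraph V A L) (t : V) (g' : PreGraph V A L)
      (ics : List (PreGraph V A L × V)) (cs : List (DTree V A L))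
      (hc : IsConstruction Cs g t)
      (hsplit : IsSplit Cs g t g' ics)
      (hlen : cs.length = ics.length)
      (hrec : ∀ (i : ℕ) (ci : DTree V A L) (gi : PreGraph V A L) (ti : V),
          cs[i]? = some ci → ics[i]? = some (gi, ti) → IsDecompositionOf Cs ci gi ti) :
      IsDecompositionOf Cs (.node g' t cs) g t

/-- `LcsRel D ls` holds iff `ls` is the leaf construction-sequence of `D`. -/
inductive LcsRel : DTree V A L → List (PreGraph V A L × V) → Prop where
  | leaf (g : PreGraph V A L) (t : V) : LcsRel (.node g t []) [(g, t)]
  | node (g : PreGraph V A L) (t : V) (cs : List (DTree V A L))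
      (ls : List (List (PreGraph V A L × V)))
      (hne : cs ≠ []) (hlen : ls.length = cs.length)
      (h : ∀ (i : ℕ) (ci : DTree V A L) (li : List (PreGraph V A L × V)),
          cs[i]? = some ci → ls[i]? = some li → LcsRel ci li) :
      LcsRel (.node g t cs) ls.flatten

/-- `(p, w)` is one of the constructions labelling a vertex of the decomposition tree. -/
inductive LabelOf : DTree V A L → PreGraph V A L → V → Prop where
  | root (g : PreGraph V A L) (t : V) (cs : List (DTree V A L)) :
      LabelOf (.node g t cs) g t
  | child (g : PreGraph V A L) (t : V) (cs : List (DTree V A L))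
      (c : DTree V A L) (p : PreGraph V A L) (w : V) :
      c ∈ cs → LabelOf c p w → LabelOf (.node g t cs) p w

/-- The union of all the graphs labelling vertices of the decomposition tree
(the graph of the construction `ct(D)` of the decomposition `D`). -/
def DTree.ctGraph (D : DTree V A L) : PreGraph V A L :=
  ⟨{x | ∃ p w, LabelOf D p w ∧ x ∈ p.Tk},
   {x | ∃ p w, LabelOf D p w ∧ x ∈ p.Cf},
   {a | ∃ p w, LabelOf D p w ∧ a ∈ p.Arr},
   {q | ∃ p w, LabelOf D p w ∧ q ∈ p.inc},
   {q | ∃ p w, LabelOf D p w ∧ q ∈ p.ia},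
   {q | ∃ p w, LabelOf D p w ∧ q ∈ p.tl},
   {q | ∃ p w, LabelOf D p w ∧ q ∈ p.cl}⟩

/-- Every vertex label of the decomposition tree satisfies `P`. -/
inductive AllLabels (P : PreGraph V A L → V → Prop) : DTree V A L → Prop where
  | node (g : PreGraph V A L) (t : V) (cs : List (DTree V A L)) :
      P g t → (∀ c, c ∈ cs → AllLabels P c) → AllLabels P (.node g t cs)

/-- The subtree of a decomposition tree at a given position (a path of child indices). -/
def subtreeAt : List ℕ → DTree V A L → Option (DTree V A L)
  | [], D => some D
  | i :: rest, .node _ _ cs =>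
    match cs[i]? with
    | some c => subtreeAt rest c
    | none => none

/-! ## Patterns and embeddings -/

/-- An embedding of the graph `g` into the graph `p`: an isomorphism preserving arrow indices
and configurator labels, with token labels respecting the subtype relation `le`. -/
def IsEmbedding (le : Set (L × L)) (g p : PreGraph V A L) (fv : V → V) (fa : A → A) : Prop :=
  (∀ x ∈ g.Tk, fv x ∈ p.Tk) ∧ (∀ x ∈ g.Cf, fv x ∈ p.Cf) ∧
  (∀ x ∈ g.Tk ∪ g.Cf, ∀ y ∈ g.Tk ∪ g.Cf, fv x = fv y → x = y) ∧
  (∀ y ∈ p.Tk, ∃ x ∈ g.Tk, fv x = y) ∧ (∀ y ∈ p.Cf, ∃ x ∈ g.Cf, fv x = y) ∧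
  (∀ a ∈ g.Arr, fa a ∈ p.Arr) ∧
  (∀ a ∈ g.Arr, ∀ b ∈ g.Arr, fa a = fa b → a = b) ∧
  (∀ b ∈ p.Arr, ∃ a ∈ g.Arr, fa a = b) ∧
  (∀ a v w, (a, (v, w)) ∈ g.inc → (fa a, (fv v, fv w)) ∈ p.inc) ∧
  (∀ a n, (a, n) ∈ g.ia → (fa a, n) ∈ p.ia) ∧
  (∀ u c, (u, c) ∈ g.cl → (fv u, c) ∈ p.cl) ∧
  (∀ x τ, (x, τ) ∈ g.tl → ∃ σ, (fv x, σ) ∈ p.tl ∧ (τ, σ) ∈ le)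

/-- The construction `(g, t)` matches the pattern `(p, v)`. -/
def MatchesPattern (le : Set (L × L)) (g : PreGraph V A L) (t : V)
    (p : PreGraph V A L) (v : V) : Prop :=
  ∃ fv fa, IsEmbedding le g p fv fa ∧ fv t = v

/-- `Ps` is a pattern space for `Cs`: a construction space over the same type system and
constructor specification such that every construction of `Cs` matches some construction
of `Ps`. -/
def IsPatternSpace (Cs Ps : CSpace V A L) : Prop :=
  Ps.Ty = Cs.Ty ∧ Ps.le = Cs.le ∧ Ps.C = Cs.C ∧ Ps.sig = Cs.sig ∧ IsCSpace Ps ∧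
  ∀ g t, IsConstruction Cs g t →
    ∃ p v, IsConstruction Ps p v ∧ MatchesPattern Cs.le g t p v

/-- Vertex-wise matching of two same-shape decomposition trees under a common pair of maps. -/
inductive DMatches (le : Set (L × L)) (fv : V → V) (fa : A → A) :
    DTree V A L → DTree V A L → Prop where
  | node (g : PreGraph V A L) (t : V) (p : PreGraph V A L) (v : V)
      (cs ds : List (DTree V A L))
      (hemb : IsEmbedding le g p fv fa) (ht : fv t = v)
      (hlen : cs.length = ds.length)
      (hrec : ∀ (i : ℕ) (ci di : DTree V A L), cs[i]? = some ci → ds[i]? = some di →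
          DMatches le fv fa ci di) :
      DMatches le fv fa (.node g t cs) (.node p v ds)

/-- The decomposition `D` matches the (pattern) decomposition `Δ`: there is an arrow-index
preserving isomorphism of trees together with an embedding of `ct(D)` into `ct(Δ)` whose
restriction to each vertex label is an embedding into the corresponding pattern label. -/
def DecompositionMatches (le : Set (L × L)) (D Δ : DTree V A L) : Prop :=
  ∃ fv fa, IsEmbedding le D.ctGraph Δ.ctGraph fv fa ∧ fv D.rootTok = Δ.rootTok ∧
    DMatches le fv fa D Δ

/-! ## Descriptions -/

/-- A description: a set of decompositions of patterns (constructions in the pattern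
space `Ps`). -/
def IsDescriptionOf (Ps : CSpace V A L) (Ds : Set (DTree V A L)) : Prop :=
  ∀ Δ ∈ Ds, ∃ p v, IsConstruction Ps p v ∧ IsDecompositionOf Ps Δ p v

/-- The description `Ds` is complete for `Cs`. -/
def CompleteDescription (Cs : CSpace V A L) (Ds : Set (DTree V A L)) : Prop :=
  ∀ g t, IsConstruction Cs g t →
    ∃ Δ ∈ Ds, ∃ D, IsDecompositionOf Cs D g t ∧ DecompositionMatches Cs.le D Δ

/-- The set of patterns labelling vertices of decompositions in `Ds`. -/
def PatternsOf (Ds : Set (DTree V A L)) : Set (PreGraph V A L × V) :=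
  {pv | ∃ Δ ∈ Ds, LabelOf Δ pv.1 pv.2}

/-- Label-preserving isomorphism of patterns/constructions. -/
def LabelIsomorphic (g : PreGraph V A L) (t : V) (p : PreGraph V A L) (v : V) : Prop :=
  ∃ fv fa, IsEmbedding {q : L × L | q.1 = q.2} g p fv fa ∧ fv t = v

/-- The description `Ds` is compact: finitely many patterns up to label-preserving
isomorphism. -/
def CompactDescription (Ds : Set (DTree V A L)) : Prop :=
  ∃ Reps : Set (PreGraph V A L × V), Reps.Finite ∧
    ∀ pv ∈ PatternsOf Ds, ∃ qw ∈ Reps, LabelIsomorphic pv.1 pv.2 qw.1 qw.2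

/-! ## Transformation constraints and structural transformations -/

/-- A transformation-constraint-shaped triple: two patterns (or constructions) together with
a set of patterns (or constructions). -/
structure TConstraint (V A L : Type*) where
  pa : PreGraph V A L
  ca : V
  pb : PreGraph V A L
  cb : V
  Pc : Set (PreGraph V A L × V)

/-- The union of the graphs of a set of patterns. -/
def pGraph (P : Set (PreGraph V A L × V)) : PreGraph V A L :=
  ⟨{x | ∃ pv ∈ P, x ∈ pv.1.Tk}, {x | ∃ pv ∈ P, x ∈ pv.1.Cf},
   {a | ∃ pv ∈ P, a ∈ pv.1.Arr}, {q | ∃ pv ∈ P, q ∈ pv.1.inc},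
   {q | ∃ pv ∈ P, q ∈ pv.1.ia}, {q | ∃ pv ∈ P, q ∈ pv.1.tl},
   {q | ∃ pv ∈ P, q ∈ pv.1.cl}⟩

/-- A respectful embedding of the set of patterns `P` into the set of patterns `P'`. -/
def RespectfulEmbedding (le : Set (L × L)) (P P' : Set (PreGraph V A L × V))
    (fv : V → V) (fa : A → A) : Prop :=
  IsEmbedding le (pGraph P) (pGraph P') fv fa ∧
  ∀ pv ∈ P, ∃ qw ∈ P', IsEmbedding le pv.1 qw.1 fv fa ∧ fv pv.2 = qw.2

/-- Satisfaction of one transformation-constraint-shaped triple by another: embeddings of the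
first two components, a respectful embedding of the third, whose common underlying maps give
an isomorphism of the unions of the graphs. -/
def TCSatisfies (le : Set (L × L)) (s s' : TConstraint V A L) : Prop :=
  ∃ fv fa,
    IsEmbedding le s.pa s'.pa fv fa ∧ fv s.ca = s'.ca ∧
    IsEmbedding le s.pb s'.pb fv fa ∧ fv s.cb = s'.cb ∧
    RespectfulEmbedding le s.Pc s'.Pc fv fa ∧
    IsEmbedding le ((s.pa ∪ s.pb) ∪ pGraph s.Pc) ((s'.pa ∪ s'.pb) ∪ pGraph s'.Pc) fv fa

/-- A transformation constraint for an encoding described by `(Ds, Ds', P'')`. -/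
def IsTransformationConstraint (Ds Ds' : Set (DTree V A L))
    (P'' : Set (PreGraph V A L × V)) (s : TConstraint V A L) : Prop :=
  (s.pa, s.ca) ∈ PatternsOf Ds ∧ (s.pb, s.cb) ∈ PatternsOf Ds' ∧ s.Pc ⊆ P''

/-- A constraint assignment for `Δ` and `Δ'`: a partial function (modelled with `Option`) on
pairs of vertices (paths) whose values are transformation constraints from `S0` matched by the
corresponding labels. -/
def IsConstraintAssignment (leR leR' : Set (L × L)) (S0 : Set (TConstraint V A L))
    (Δ Δ' : DTree V A L) (Lm : List ℕ → List ℕ → Option (TConstraint V A L)) : Prop :=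
  ∀ pi pi' s, Lm pi pi' = some s → s ∈ S0 ∧
    (∃ δ, subtreeAt pi Δ = some δ ∧
        MatchesPattern leR δ.rootGraph δ.rootTok s.pa s.ca) ∧
    (∃ δ', subtreeAt pi' Δ' = some δ' ∧
        MatchesPattern leR' δ'.rootGraph δ'.rootTok s.pb s.cb)

/-- The constraint assignment `Lm` is satisfied by the pair of decompositions `(D, D')`
(whose vertices correspond, via the shape-preserving matchings, to those of `Δ`, `Δ'`). -/
def LSatisfiedBy (leI : Set (L × L)) (Ip : CSpace V A L)
    (Lm : List ℕ → List ℕ → Option (TConstraint V A L)) (D D' : DTree V A L) : Prop :=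
  ∀ pi pi' s d d', Lm pi pi' = some s →
    subtreeAt pi D = some d → subtreeAt pi' D' = some d' →
    ∃ Cset : Set (PreGraph V A L × V),
      (∀ pv ∈ Cset, IsConstruction Ip pv.1 pv.2) ∧
      TCSatisfies leI ⟨d.rootGraph, d.rootTok, d'.rootGraph, d'.rootTok, Cset⟩ s

/-- `(g', t')` is a structural `L`-transformation of `(g, t)` (with respect to the pattern
decompositions `Δ`, `Δ'` for the universal spaces `Ru`, `Ru'` and the inter-property
identification space `Ip`). -/
def IsStructuralLTransformation (Ru Ru' Ip : CSpace V A L) (Δ Δ' : DTree V A L)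
    (Lm : List ℕ → List ℕ → Option (TConstraint V A L))
    (g : PreGraph V A L) (t : V) (g' : PreGraph V A L) (t' : V) : Prop :=
  (∃ D, IsDecompositionOf Ru D g t ∧ DecompositionMatches Ru.le D Δ) ∧
  (∃ D', IsDecompositionOf Ru' D' g' t' ∧ DecompositionMatches Ru'.le D' Δ') ∧
  ∀ D D', IsDecompositionOf Ru D g t → DecompositionMatches Ru.le D Δ →
    IsDecompositionOf Ru' D' g' t' → DecompositionMatches Ru'.le D' Δ' →
    LSatisfiedBy Ip.le Ip Lm D D'

/-- Partial satisfaction: the constraint is only checked at vertices of the pattern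
decomposition `Δh` whose label is already a construction in `Ru'`. -/
def LPartialSatisfiedBy (leI : Set (L × L)) (Ip Ru' : CSpace V A L)
    (Lm : List ℕ → List ℕ → Option (TConstraint V A L)) (D Δh : DTree V A L) : Prop :=
  ∀ pi pi' s d δh, Lm pi pi' = some s →
    subtreeAt pi D = some d → subtreeAt pi' Δh = some δh →
    IsConstructionIn Ru' δh.rootGraph δh.rootTok →
    ∃ Cset : Set (PreGraph V A L × V),
      (∀ pv ∈ Cset, IsConstruction Ip pv.1 pv.2) ∧
      TCSatisfies leI ⟨d.rootGraph, d.rootTok, δh.rootGraph, δh.rootTok, Cset⟩ s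

/-- The pattern `(ph, vh)` (a construction in the pattern space `Ps'` for `Ru'`) is a partial
`L`-transformation of the construction `(g, t)`. -/
def IsPartialLTransformation (Ru Ru' Ip Ps' : CSpace V A L) (Δ Δ' : DTree V A L)
    (Lm : List ℕ → List ℕ → Option (TConstraint V A L))
    (g : PreGraph V A L) (t : V) (ph : PreGraph V A L) (vh : V) : Prop :=
  (∃ D, IsDecompositionOf Ru D g t ∧ DecompositionMatches Ru.le D Δ) ∧
  (∃ Δh, IsDecompositionOf Ps' Δh ph vh ∧ DecompositionMatches Ru'.le Δh Δ') ∧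
  ∀ D Δh, IsDecompositionOf Ru D g t → DecompositionMatches Ru.le D Δ →
    IsDecompositionOf Ps' Δh ph vh → DecompositionMatches Ru'.le Δh Δ' →
    LPartialSatisfiedBy Ip.le Ip Ru' Lm D Δh

/-! ## Validity, soundness, leaf instantiation -/

/-- Validity of `Lm` for `(g, t)` and `(p, v)` at the pair of vertices `(pi, pi')`. -/
def ValidAt (Ru Ru' Ip Ps' : CSpace V A L) (Δ Δ' : DTree V A L)
    (Lm : List ℕ → List ℕ → Option (TConstraint V A L))
    (g : PreGraph V A L) (t : V) (p : PreGraph V A L) (v : V)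
    (pi pi' : List ℕ) : Prop :=
  ∀ D Δh Dsub Δhsub Δsub Δsub',
    IsDecompositionOf Ru D g t → DecompositionMatches Ru.le D Δ →
    IsDecompositionOf Ps' Δh p v → DecompositionMatches Ru'.le Δh Δ' →
    subtreeAt pi D = some Dsub → subtreeAt pi' Δh = some Δhsub →
    subtreeAt pi Δ = some Δsub → subtreeAt pi' Δ' = some Δsub' →
    IsConstructionIn Ru' Δhsub.ctGraph Δhsub.rootTok →
    IsStructuralLTransformation Ru Ru' Ip Δsub Δsub'
      (fun σ σ' => Lm (pi ++ σ) (pi' ++ σ'))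
      Dsub.ctGraph Dsub.rootTok Δhsub.ctGraph Δhsub.rootTok

/-- Ancestor-validity: validity at every pair of proper descendants-in-the-tree
("ancestors" in the paper's in-tree terminology). -/
def AncestorValidAt (Ru Ru' Ip Ps' : CSpace V A L) (Δ Δ' : DTree V A L)
    (Lm : List ℕ → List ℕ → Option (TConstraint V A L))
    (g : PreGraph V A L) (t : V) (p : PreGraph V A L) (v : V)
    (pi pi' : List ℕ) : Prop :=
  ∀ σ σ' : List ℕ, σ ≠ [] → σ' ≠ [] →
    (∃ d, subtreeAt (pi ++ σ) Δ = some d) → (∃ d', subtreeAt (pi' ++ σ') Δ' = some d') →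
    ValidAt Ru Ru' Ip Ps' Δ Δ' Lm g t p v (pi ++ σ) (pi' ++ σ')

/-- Soundness of a constraint assignment. -/
def SoundAssignment (Ru Ru' Ip Ps' : CSpace V A L) (Δ Δ' : DTree V A L)
    (Lm : List ℕ → List ℕ → Option (TConstraint V A L)) : Prop :=
  ∀ g t, IsConstructionIn Ru g t →
    (∃ D, IsDecompositionOf Ru D g t ∧ DecompositionMatches Ru.le D Δ) →
    ∀ p v, IsConstruction Ps' p v →
      (∃ Δh, IsDecompositionOf Ps' Δh p v ∧ DecompositionMatches Ru'.le Δh Δ') →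
      ∀ pi pi', (∃ d, subtreeAt pi Δ = some d) → (∃ d', subtreeAt pi' Δ' = some d') →
        AncestorValidAt Ru Ru' Ip Ps' Δ Δ' Lm g t p v pi pi' →
        ValidAt Ru Ru' Ip Ps' Δ Δ' Lm g t p v pi pi'

/-- The pattern `(p, v)` leaf-instantiates `Δ'`: it matches `Δ'` and every leaf of its
`Δ'`-canonical decomposition is labelled by a construction in `Ru'`. -/
def LeafInstantiates (Ru' Ps' : CSpace V A L) (Δ' : DTree V A L)
    (p : PreGraph V A L) (v : V) : Prop :=
  (∃ Δh, IsDecompositionOf Ps' Δh p v ∧ DecompositionMatches Ru'.le Δh Δ') ∧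
  ∀ Δh, IsDecompositionOf Ps' Δh p v → DecompositionMatches Ru'.le Δh Δ' →
    ∀ pi δh, subtreeAt pi Δh = some δh → δh.kids = [] →
      IsConstructionIn Ru' δh.rootGraph δh.rootTok

/-- A complete extension of a pattern `(p, v)` that leaf-instantiates `Δ'`. -/
def CompleteExtension (Ru' Ps' : CSpace V A L) (Δ' : DTree V A L)
    (p : PreGraph V A L) (v : V) (g' : PreGraph V A L) (t' : V) : Prop :=
  IsConstructionIn Ru' g' t' ∧
  ∃ fv fa, IsEmbedding Ru'.le g' p fv fa ∧ fv t' = v ∧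
    ∀ Δh, IsDecompositionOf Ps' Δh p v → DecompositionMatches Ru'.le Δh Δ' →
      ∀ pi δh, subtreeAt pi Δh = some δh → δh.kids = [] →
        ∀ x ∈ δh.rootGraph.Tk, x ∈ g'.Tk ∧ fv x = x

/-- `(g, t)` and `(p, v)` are valid at the leaves of `Δ` and `Δ'`. -/
def ValidAtLeaves (Ru Ru' Ip Ps' : CSpace V A L) (Δ Δ' : DTree V A L)
    (Lm : List ℕ → List ℕ → Option (TConstraint V A L))
    (g : PreGraph V A L) (t : V) (p : PreGraph V A L) (v : V) : Prop :=
  ∀ pi pi' δ δ', subtreeAt pi Δ = some δ → subtreeAt pi' Δ' = some δ' →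
    δ.kids = [] → δ'.kids = [] →
    ValidAt Ru Ru' Ip Ps' Δ Δ' Lm g t p v pi pi'



/-! ## Auxiliary list lemmas -/

section ListHelpers

lemma lt_of_getElem?_some {α : Type*} {l : List α} {i : ℕ} {a : α}
    (h : l[i]? = some a) : i < l.length := by
  rcases List.getElem?_eq_some_iff.1 h with ⟨h', _⟩; exact h'

lemma forall₂_of_getElem? {α β : Type*} {R : α → β → Prop} {l₁ : List α} {l₂ : List β}
    (hlen : l₁.length = l₂.length)
    (h : ∀ (i : ℕ) (a : α) (b : β), l₁[i]? = some a → l₂[i]? = some b → R a b) : List.Forall₂ R l₁ l₂ := by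
  rw [List.forall₂_iff_get]
  refine ⟨hlen, fun i h₁ h₂ => ?_⟩
  simp only [List.get_eq_getElem]
  exact h i l₁[i] l₂[i] (List.getElem?_eq_getElem h₁) (List.getElem?_eq_getElem h₂)

lemma forall₂_getElem {α β : Type*} {R : α → β → Prop} {l₁ : List α} {l₂ : List β}
    (h : List.Forall₂ R l₁ l₂) {i : ℕ} {a : α} {b : β}
    (h₁ : l₁[i]? = some a) (h₂ : l₂[i]? = some b) : R a b := by
  obtain ⟨hlen, hp⟩ := List.forall₂_iff_get.1 h
  obtain ⟨hi₁, e₁⟩ := List.getElem?_eq_some_iff.1 h₁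
  obtain ⟨hi₂, e₂⟩ := List.getElem?_eq_some_iff.1 h₂
  have := hp i hi₁ hi₂
  simp only [List.get_eq_getElem] at this
  rw [e₁, e₂] at this
  exact this

lemma map_eq_of_forall₂ {α β γ : Type*} {f : α → γ} {g : β → γ}
    {l₁ : List α} {l₂ : List β}
    (h : List.Forall₂ (fun a b => f a = g b) l₁ l₂) : l₁.map f = l₂.map g := by
  induction h with
  | nil => rfl
  | cons h _ ih => simp [*]

lemma forall₂_append_split {α β : Type*} {R : α → β → Prop} :
    ∀ {l₁ l₂ : List α} {F : List β}, List.Forall₂ R (l₁ ++ l₂) F →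
      ∃ F₁ F₂, F = F₁ ++ F₂ ∧ List.Forall₂ R l₁ F₁ ∧ List.Forall₂ R l₂ F₂ := by
  intro l₁
  induction l₁ with
  | nil => exact fun {l₂ F} h => ⟨[], F, rfl, List.Forall₂.nil, h⟩
  | cons a l₁ ih =>
      intro l₂ F h
      rw [List.cons_append] at h
      cases h with
      | cons hr htail =>
          obtain ⟨F₁, F₂, rfl, h₁, h₂⟩ := ih htail
          exact ⟨_ :: F₁, F₂, rfl, List.Forall₂.cons hr h₁, h₂⟩

lemma forall₂_flatten_left {α β : Type*} {R : α → β → Prop} :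
    ∀ {lss : List (List α)} {F : List β}, List.Forall₂ R lss.flatten F →
      ∃ Fss : List (List β), F = Fss.flatten ∧ List.Forall₂ (List.Forall₂ R) lss Fss := by
  intro lss
  induction lss with
  | nil =>
      intro F h
      rw [List.flatten_nil] at h
      cases h
      exact ⟨[], rfl, List.Forall₂.nil⟩
  | cons l lss ih =>
      intro F h
      rw [List.flatten_cons] at h
      obtain ⟨F₁, F₂, rfl, h₁, h₂⟩ := forall₂_append_split h
      obtain ⟨Fss, rfl, hFss⟩ := ih h₂
      exact ⟨F₁ :: Fss, rfl, List.Forall₂.cons h₁ hFss⟩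

lemma mem_zipWith' {α β γ : Type*} {f : α → β → γ} :
    ∀ {l₁ : List α} {l₂ : List β} {c : γ}, c ∈ List.zipWith f l₁ l₂ →
      ∃ (i : ℕ) (a : α) (b : β), l₁[i]? = some a ∧ l₂[i]? = some b ∧ c = f a b := by
  intro l₁
  induction l₁ with
  | nil => intro l₂ c h; simp at h
  | cons a l₁ ih =>
      intro l₂ c h
      cases l₂ with
      | nil => simp at h
      | cons b l₂ =>
          rw [List.zipWith_cons_cons] at h
          rcases List.mem_cons.1 h with rfl | h'
          · exact ⟨0, a, b, by simp, by simp, rfl⟩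
          · obtain ⟨i, a', b', h1, h2, h3⟩ := ih h'
            exact ⟨i+1, a', b', by simpa using h1, by simpa using h2, h3⟩

lemma getElem?_zipWith' {α β γ : Type*} {f : α → β → γ}
    {l₁ : List α} {l₂ : List β} {i : ℕ} {a : α} {b : β}
    (h₁ : l₁[i]? = some a) (h₂ : l₂[i]? = some b) :
    (List.zipWith f l₁ l₂)[i]? = some (f a b) := by
  rw [List.getElem?_zipWith, h₁, h₂]

end ListHelpers

/-! ## Basic graph lemmas -/

section GraphHelpers

variable {g g' : PreGraph V A L}

lemma cf_of_inc (hg : IsGraph g) {a : A} {u x : V}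
    (h : (a, (u, x)) ∈ g.inc) (hx : x ∈ g.Tk) : u ∈ g.Cf := by
  rcases hg.2.2.1 a u x h with ⟨hu, hxc⟩ | ⟨hu, _⟩
  · exact absurd hx (Set.disjoint_right.1 hg.1 hxc)
  · exact hu

lemma tk_of_inc (hg : IsGraph g) {a : A} {x u : V}
    (h : (a, (x, u)) ∈ g.inc) (hu : u ∈ g.Cf) : x ∈ g.Tk := by
  rcases hg.2.2.1 a x u h with ⟨hx, _⟩ | ⟨_, hut⟩
  · exact hx
  · exact absurd hu (Set.disjoint_left.1 hg.1 hut)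

lemma inc_arr (hg : IsGraph g) {a : A} {p : V × V} (h : (a, p) ∈ g.inc) : a ∈ g.Arr :=
  hg.2.1.1 _ h

lemma inc_unique (hg : IsGraph g) {a : A} {p q : V × V}
    (h1 : (a, p) ∈ g.inc) (h2 : (a, q) ∈ g.inc) : p = q := by
  obtain ⟨y, _, huniq⟩ := hg.2.1.2 a (inc_arr hg h1)
  rw [huniq _ h1, huniq _ h2]

lemma ia_unique (hg : IsGraph g) {a : A} {m n : ℕ}
    (ha : a ∈ g.Arr) (h1 : (a, m) ∈ g.ia) (h2 : (a, n) ∈ g.ia) : m = n := by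
  obtain ⟨y, _, huniq⟩ := hg.2.2.2.1.2 a ha
  rw [huniq _ h1, huniq _ h2]

lemma inArrowSeq_unique (hg : IsGraph g) {u : V} {l₁ l₂ : List A}
    (h₁ : InArrowSeq g u l₁) (h₂ : InArrowSeq g u l₂) : l₁ = l₂ := by
  obtain ⟨nd₁, mem₁, idx₁⟩ := h₁
  obtain ⟨nd₂, mem₂, idx₂⟩ := h₂
  have key : ∀ (m₁ m₂ : List A), (∀ x, x ∈ m₁ ↔ x ∈ g.Arr ∧ ∃ w, (x, (w, u)) ∈ g.inc) →
      (∀ x, x ∈ m₂ ↔ x ∈ g.Arr ∧ ∃ w, (x, (w, u)) ∈ g.inc) →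
      (∀ (i : ℕ) (x : A), m₁[i]? = some x → (x, i + 1) ∈ g.ia) →
      (∀ (i : ℕ) (x : A), m₂[i]? = some x → (x, i + 1) ∈ g.ia) →
      ∀ (i : ℕ) (x : A), m₁[i]? = some x → m₂[i]? = some x := by
    intro m₁ m₂ hm₁ hm₂ hi₁ hi₂ i x hx
    have hxm : x ∈ m₂ := (hm₂ x).2 ((hm₁ x).1 (List.mem_of_getElem? hx))
    obtain ⟨j, hj⟩ := List.mem_iff_getElem?.1 hxm
    have hij : i + 1 = j + 1 :=
      ia_unique hg ((hm₁ x).1 (List.mem_of_getElem? hx)).1 (hi₁ i x hx) (hi₂ j x hj)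
    have : i = j := by omega
    exact this ▸ hj
  apply List.ext_getElem?
  intro n
  cases h : l₁[n]? with
  | some x => exact (key l₁ l₂ mem₁ mem₂ idx₁ idx₂ n x h).symm ▸ rfl
  | none =>
      cases h' : l₂[n]? with
      | none => rfl
      | some y =>
          have := key l₂ l₁ mem₂ mem₁ idx₂ idx₁ n y h'
          rw [this] at h
          exact absurd h (by simp)

lemma inArrowSeq_of_nh (hg : IsGraph g) {u : V} {l : List A}
    (h : InArrowSeq (g.Nh u) u l) : InArrowSeq g u l := by
  obtain ⟨nd, mem, idx⟩ := h
  refine ⟨nd, fun a => ?_, fun i a hi => (idx i a hi).1⟩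
  rw [mem a]
  constructor
  · rintro ⟨⟨ha, _⟩, w, hw, _⟩
    exact ⟨ha, w, hw⟩
  · rintro ⟨ha, w, hw⟩
    have hincid : a ∈ g.incidentArrows u := ⟨ha, w, Or.inl hw⟩
    exact ⟨⟨ha, hincid⟩, w, hw, hincid⟩

end GraphHelpers

/-! ## Structure graph lemmas -/

section SGHelpers

variable {Ty : Set L} {le : Set (L × L)} {C : Set L} {sig : Set (L × (List L × L))}
variable {g g' : PreGraph V A L}

lemma sg_out_unique (hsg : IsStructureGraph Ty le C sig g)
    {u : V} (hu : u ∈ g.Cf) {a b : A} (ha : a ∈ g.Arr) (hb : b ∈ g.Arr) {w w' : V}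
    (hia : (a, (u, w)) ∈ g.inc) (hib : (b, (u, w')) ∈ g.inc) : a = b := by
  obtain ⟨c, ins, out, _, _, _, hconf⟩ := hsg.2.2 u hu
  obtain ⟨_, _, _, _, hout, _⟩ := hconf
  obtain ⟨a0, _, huniq⟩ := hout
  have hai : a ∈ (g.Nh u).Arr ∧ ∃ v, (a, (u, v)) ∈ (g.Nh u).inc := by
    have hincid : a ∈ g.incidentArrows u := ⟨ha, w, Or.inr hia⟩
    exact ⟨⟨ha, hincid⟩, w, hia, hincid⟩
  have hbi : b ∈ (g.Nh u).Arr ∧ ∃ v, (b, (u, v)) ∈ (g.Nh u).inc := by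
    have hincid : b ∈ g.incidentArrows u := ⟨hb, w', Or.inr hib⟩
    exact ⟨⟨hb, hincid⟩, w', hib, hincid⟩
  rw [huniq a hai, huniq b hbi]

lemma sg_inArrowSeq_ex (hsg : IsStructureGraph Ty le C sig g) {u : V} (hu : u ∈ g.Cf) :
    ∃ c ins out, (u, c) ∈ g.cl ∧ (c, (ins, out)) ∈ sig ∧
      ∃ ars, InArrowSeq g u ars ∧ ars.length = ins.length := by
  obtain ⟨c, ins, out, hcl, _, hsig, hconf⟩ := hsg.2.2 u hu
  obtain ⟨_, _, _, _, _, _, ars, hars, hlen, _⟩ := hconf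
  exact ⟨c, ins, out, hcl, hsig, ars, inArrowSeq_of_nh hsg.1 hars, hlen⟩

lemma sg_ars_ne_nil {Cs : CSpace V A L} (hCs : IsCSpace Cs)
    (hsg : IsStructureGraph Cs.Ty Cs.le Cs.C Cs.sig g)
    {u : V} (hu : u ∈ g.Cf) {ars : List A} (hars : InArrowSeq g u ars) : ars ≠ [] := by
  obtain ⟨c, ins, out, hcl, hsig, ars', h1, h2⟩ := sg_inArrowSeq_ex hsg hu
  have hne : ins ≠ [] := (hCs.2.2.2.1 c ins out hsig).1
  have heq : ars = ars' := inArrowSeq_unique hsg.1 hars h1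
  intro h
  rw [h] at heq
  have : ins.length = 0 := by rw [← h2, ← heq]; rfl
  exact hne (List.eq_nil_of_length_eq_zero this)

lemma subgraph_inArrowSeq {Cs : CSpace V A L} (hCs : IsCSpace Cs)
    (hsg' : IsStructureGraph Cs.Ty Cs.le Cs.C Cs.sig g')
    (hsg : IsStructureGraph Cs.Ty Cs.le Cs.C Cs.sig g)
    (hsub : g'.Subgraph g) {u : V} (hu : u ∈ g'.Cf) {ars : List A}
    (hars : InArrowSeq g' u ars) : InArrowSeq g u ars := by
  obtain ⟨hsTk, hsCf, hsArr, hsinc, hsia, hstl, hscl⟩ := hsub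
  obtain ⟨c', ins', out', hcl', hsig', ars1, h1, hlen1⟩ := sg_inArrowSeq_ex hsg' hu
  obtain ⟨c, ins, out, hcl, hsig, ars2, h2, hlen2⟩ := sg_inArrowSeq_ex hsg (hsCf hu)
  have heq1 : ars = ars1 := inArrowSeq_unique hsg'.1 hars h1
  have hcc : c' = c := by
    obtain ⟨y, _, huniq⟩ := hsg.1.2.2.2.2.2.2 u (hsCf hu)
    rw [huniq _ (hscl hcl'), huniq _ hcl]
  have hins : ins' = ins := by
    obtain ⟨y, _, huniq⟩ := hCs.2.2.1.2 c (hCs.2.2.1.1 _ hsig)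
    have := huniq _ hsig
    have h2' := huniq _ (hcc ▸ hsig')
    rw [← this] at h2'
    exact (Prod.ext_iff.1 h2').1
  have hlen : ars.length = ars2.length := by
    rw [heq1, hlen1, hins, hlen2]
  have key : ∀ (i : ℕ) (x : A), ars[i]? = some x → ars2[i]? = some x := by
    intro i x hx
    have hmem := (hars.2.1 x).1 (List.mem_of_getElem? hx)
    obtain ⟨hxA, w, hw⟩ := hmem
    have hx2 : x ∈ ars2 := (h2.2.1 x).2 ⟨hsArr hxA, w, hsinc hw⟩
    obtain ⟨j, hj⟩ := List.mem_iff_getElem?.1 hx2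
    have hij : i + 1 = j + 1 :=
      ia_unique hsg.1 (hsArr hxA) (hsia (hars.2.2 i x hx)) (h2.2.2 j x hj)
    have : i = j := by omega
    exact this ▸ hj
  have : ars = ars2 := by
    apply List.ext_getElem?
    intro n
    cases h : ars[n]? with
    | some x => exact (key n x h).symm
    | none =>
        have : ars.length ≤ n := by
          by_contra hc
          push_neg at hc
          rw [List.getElem?_eq_getElem hc] at h
          exact absurd h (by simp)
        rw [List.getElem?_eq_none (hlen ▸ this)]
  rw [this]
  exact h2

end SGHelpers

/-! ## TES lemmas -/

section TESHelpers

variable {g g' : PreGraph V A L}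

lemma mem_tes_out {a : A} {s : V} {ars : List A} {Ss : List (List (Trail V A))}
    {w : Trail V A}
    (hw : w ∈ (List.zipWith (fun (ai : A) (Si : List (Trail V A)) =>
        Si.map (fun e => (⟨e.arrows ++ [ai, a], e.src, s⟩ : Trail V A))) ars Ss).flatten) :
    ∃ (i : ℕ) (ai : A) (Si : List (Trail V A)) (e : Trail V A),
      ars[i]? = some ai ∧ Ss[i]? = some Si ∧ e ∈ Si ∧
      w = ⟨e.arrows ++ [ai, a], e.src, s⟩ := by
  obtain ⟨l, hl, hwl⟩ := List.mem_flatten.1 hw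
  obtain ⟨i, ai, Si, h1, h2, rfl⟩ := mem_zipWith' hl
  obtain ⟨e, he, rfl⟩ := List.mem_map.1 hwl
  exact ⟨i, ai, Si, e, h1, h2, he, rfl⟩

lemma tes_out_mem {a : A} {s : V} {ars : List A} {Ss : List (List (Trail V A))}
    {i : ℕ} {ai : A} {Si : List (Trail V A)} {e : Trail V A}
    (h1 : ars[i]? = some ai) (h2 : Ss[i]? = some Si) (he : e ∈ Si) :
    (⟨e.arrows ++ [ai, a], e.src, s⟩ : Trail V A) ∈
      (List.zipWith (fun (ai : A) (Si : List (Trail V A)) =>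
        Si.map (fun e => (⟨e.arrows ++ [ai, a], e.src, s⟩ : Trail V A))) ars Ss).flatten :=
  List.mem_flatten.2 ⟨_, List.mem_of_getElem? (getElem?_zipWith' h1 h2),
    List.mem_map.2 ⟨e, he, rfl⟩⟩

lemma TES_tgt {tr : Trail V A} {S : List (Trail V A)} (hS : TES g tr S) :
    ∀ w ∈ S, w.tgt = tr.src := by
  cases hS with
  | nonext tr h =>
      intro w hw; rw [List.mem_singleton] at hw; subst hw; rfl
  | ext tr a u ars Ss hext hinc hars hlen hrec =>
      intro w hw
      obtain ⟨i, ai, Si, e, _, _, _, rfl⟩ := mem_tes_out hw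
      rfl

lemma TES_src_tk (hg : IsGraph g) {tr : Trail V A} {S : List (Trail V A)} (hS : TES g tr S) :
    tr.src ∈ g.Tk → ∀ w ∈ S, w.src ∈ g.Tk := by
  induction hS with
  | nonext tr h =>
      intro hsrc w hw; rw [List.mem_singleton] at hw; subst hw; exact hsrc
  | ext tr a u ars Ss hext hinc hars hlen hrec ih =>
      intro hsrc w hw
      obtain ⟨i, ai, Si, e, h1, h2, he, rfl⟩ := mem_tes_out hw
      have hu : u ∈ g.Cf := cf_of_inc hg hinc hsrc
      obtain ⟨haiA, si, hsi⟩ := (hars.2.1 ai).1 (List.mem_of_getElem? h1)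
      exact ih i ai si Si h1 h2 hsi (tk_of_inc hg hsi hu) e he

lemma TES_chain {tr : Trail V A} {S : List (Trail V A)} (hS : TES g tr S) :
    ChainIn g tr.arrows tr.src tr.tgt →
    ∀ w ∈ S, ChainIn g (w.arrows ++ tr.arrows) w.src tr.tgt := by
  induction hS with
  | nonext tr h =>
      intro hch w hw
      rw [List.mem_singleton] at hw; subst hw
      simpa using hch
  | ext tr a u ars Ss hext hinc hars hlen hrec ih =>
      intro hch w hw
      obtain ⟨i, ai, Si, e, h1, h2, he, rfl⟩ := mem_tes_out hw
      obtain ⟨haiA, si, hsi⟩ := (hars.2.1 ai).1 (List.mem_of_getElem? h1)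
      have hch' : ChainIn g (ai :: a :: tr.arrows) si tr.tgt :=
        ⟨haiA, u, hsi, hext.1, tr.src, hinc, hch⟩
      have := ih i ai si Si h1 h2 hsi hch' e he
      simpa [List.append_assoc] using this

lemma TES_ne_nil (hg : IsGraph g)
    (hne : ∀ (u : V) (ars : List A), u ∈ g.Cf → InArrowSeq g u ars → ars ≠ [])
    {tr : Trail V A} {S : List (Trail V A)} (hS : TES g tr S) :
    tr.src ∈ g.Tk → S ≠ [] := by
  induction hS with
  | nonext tr h => intro _; simp
  | ext tr a u ars Ss hext hinc hars hlen hrec ih =>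
      intro hsrc
      have hu : u ∈ g.Cf := cf_of_inc hg hinc hsrc
      have hars_ne := hne u ars hu hars
      intro hflat
      rw [List.flatten_eq_nil_iff] at hflat
      cases hars0 : ars with
      | nil => exact hars_ne hars0
      | cons a0 ars' =>
          cases hSs0 : Ss with
          | nil =>
              rw [hars0, hSs0] at hlen
              simp at hlen
          | cons S0 Ss' =>
              have h1 : ars[0]? = some a0 := by rw [hars0]; simp
              have h2 : Ss[0]? = some S0 := by rw [hSs0]; simp
              obtain ⟨haiA, si, hsi⟩ := (hars.2.1 a0).1 (List.mem_of_getElem? h1)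
              have hS0ne : S0 ≠ [] := ih 0 a0 si S0 h1 h2 hsi (tk_of_inc hg hsi hu)
              have hmap := hflat _ (List.mem_of_getElem? (getElem?_zipWith' h1 h2))
              rw [List.map_eq_nil_iff] at hmap
              exact hS0ne hmap

lemma chain_arr : ∀ {l : List A} {s t : V}, ChainIn g l s t → ∀ x ∈ l, x ∈ g.Arr := by
  intro l
  induction l with
  | nil => intro s t h x hx; simp at hx
  | cons c rest ih =>
      intro s t h x hx
      obtain ⟨hcA, m, hm, hrest⟩ := h
      rcases List.mem_cons.1 hx with rfl | hx'
      · exact hcA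
      · exact ih hrest x hx'

lemma chain_sub (hArr : g'.Arr ⊆ g.Arr) (hinc : g'.inc ⊆ g.inc) :
    ∀ {l : List A} {s t : V}, ChainIn g' l s t → ChainIn g l s t := by
  intro l
  induction l with
  | nil => intro s t h; exact h
  | cons c rest ih =>
      intro s t h
      obtain ⟨hcA, m, hm, hrest⟩ := h
      exact ⟨hArr hcA, m, hinc hm, ih hrest⟩

lemma chain_next (hg : IsGraph g) :
    ∀ {l : List A} {s t : V}, ChainIn g l s t → ∀ {ai : A} {si u : V}, ai ∈ l →
      (ai, (si, u)) ∈ g.inc →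
      u = t ∨ ∃ b ∈ l, ∃ m, (b, (u, m)) ∈ g.inc := by
  intro l
  induction l with
  | nil => intro s t h ai si u hm; simp at hm
  | cons c rest ih =>
      intro s t hch ai si u hm hinc
      obtain ⟨hcA, m0, hc, hrest⟩ := hch
      rcases List.mem_cons.1 hm with rfl | hm'
      · have hpq : ((si, u) : V × V) = (s, m0) := inc_unique hg hinc hc
        have hu : u = m0 := (Prod.ext_iff.1 hpq).2
        subst hu
        cases rest with
        | nil => left; exact hrest
        | cons b rest' =>
            right
            obtain ⟨hbA, m1, hb, _⟩ := hrest
            exact ⟨b, by simp, m1, hb⟩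
      · rcases ih hrest hm' hinc with h | ⟨b, hb, m, hbm⟩
        · left; exact h
        · right; exact ⟨b, List.mem_cons_of_mem _ hb, m, hbm⟩

lemma TES_arrows (hg : IsGraph g)
    (hout : ∀ u ∈ g.Cf, ∀ a ∈ g.Arr, ∀ b ∈ g.Arr, ∀ w w' : V,
        (a, (u, w)) ∈ g.inc → (b, (u, w')) ∈ g.inc → a = b)
    {tr : Trail V A} {S : List (Trail V A)} (hS : TES g tr S) :
    tr.src ∈ g.Tk → tr.tgt ∈ g.Tk → ChainIn g tr.arrows tr.src tr.tgt →
    ∀ w ∈ S, ∀ x ∈ w.arrows, x ∈ g.Arr ∧ x ∉ tr.arrows := by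
  induction hS with
  | nonext tr h =>
      intro _ _ _ w hw x hx
      rw [List.mem_singleton] at hw; subst hw; simp at hx
  | ext tr a u ars Ss hext hinc hars hlen hrec ih =>
      intro hsrc htgt hch w hw x hx
      obtain ⟨i, ai, Si, e, h1, h2, he, rfl⟩ := mem_tes_out hw
      have hu : u ∈ g.Cf := cf_of_inc hg hinc hsrc
      obtain ⟨haiA, si, hsi⟩ := (hars.2.1 ai).1 (List.mem_of_getElem? h1)
      have haA : a ∈ g.Arr := hext.1
      have hanot : a ∉ tr.arrows := hext.2.1
      have hainot : ai ∉ tr.arrows := by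
        intro hmem
        rcases chain_next hg hch hmem hsi with h | ⟨b, hbmem, m, hbinc⟩
        · rw [h] at hu
          exact Set.disjoint_right.1 hg.1 hu htgt
        · have hbA : b ∈ g.Arr := chain_arr hch b hbmem
          have hba : b = a := hout u hu b hbA a haA m tr.src hbinc hinc
          rw [hba] at hbmem
          exact hanot hbmem
      have hch' : ChainIn g (ai :: a :: tr.arrows) si tr.tgt :=
        ⟨haiA, u, hsi, haA, tr.src, hinc, hch⟩
      rcases List.mem_append.1 hx with hxe | hxtail
      · have := ih i ai si Si h1 h2 hsi (tk_of_inc hg hsi hu) htgt hch' e he x hxe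
        refine ⟨this.1, fun hmem => this.2 ?_⟩
        simp [hmem]
      · simp only [List.mem_cons, List.mem_singleton, List.not_mem_nil, or_false] at hxtail
        rcases hxtail with rfl | rfl
        · exact ⟨haiA, hainot⟩
        · exact ⟨haA, hanot⟩

lemma TES_det (hg : IsGraph g) (huni : UniStructured g)
    {tr : Trail V A} {S : List (Trail V A)} (hS : TES g tr S) :
    tr.src ∈ g.Tk → ∀ S', TES g tr S' → S = S' := by
  induction hS with
  | nonext tr hne =>
      intro hsrc S' hS'
      cases hS' with
      | nonext _ h => rfl
      | ext _ a u ars Ss hext hinc hars hlen hrec => exact absurd ⟨a, hext⟩ hne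
  | ext tr a u ars Ss hext hinc hars hlen hrec ih =>
      intro hsrc S' hS'
      cases hS' with
      | nonext _ hne => exact absurd ⟨a, hext⟩ hne
      | ext _ a₂ u₂ ars₂ Ss₂ hext₂ hinc₂ hars₂ hlen₂ hrec₂ =>
          obtain ⟨s₂, hs₂⟩ := hext₂.2.2
          obtain ⟨s₁, hs₁⟩ := hext.2.2
          have ha : a₂ = a := huni tr.src hsrc a₂ hext₂.1 a hext.1 ⟨s₂, hs₂⟩ ⟨s₁, hs₁⟩
          subst ha
          have hu2 : u₂ = u := by
            have := inc_unique hg hinc₂ hinc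
            exact (Prod.ext_iff.1 this).1
          subst hu2
          have hars2 : ars₂ = ars := inArrowSeq_unique hg hars₂ hars
          subst hars2
          have hSs : Ss = Ss₂ := by
            apply List.ext_getElem?
            intro n
            cases hn : Ss[n]? with
            | none =>
                have hle : Ss.length ≤ n := by
                  by_contra hc; push_neg at hc
                  rw [List.getElem?_eq_getElem hc] at hn; exact absurd hn (by simp)
                have hle2 : Ss₂.length ≤ n := by rw [hlen₂, ← hlen]; exact hle
                rw [List.getElem?_eq_none hle2]
            | some Si =>
                have hn' : n < Ss.length := lt_of_getElem?_some hn
                have hna : n < ars₂.length := hlen ▸ hn'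
                have harsn : ars₂[n]? = some ars₂[n] := List.getElem?_eq_getElem hna
                obtain ⟨haiA, si, hsi⟩ := (hars.2.1 ars₂[n]).1 (List.mem_of_getElem? harsn)
                have hn2 : n < Ss₂.length := by rw [hlen₂]; exact hna
                have h2 : Ss₂[n]? = some Ss₂[n] := List.getElem?_eq_getElem hn2
                have hT2 := hrec₂ n ars₂[n] si Ss₂[n] harsn h2 hsi
                have heq := ih n ars₂[n] si Si harsn hn hsi
                  (tk_of_inc hg hsi (cf_of_inc hg hinc hsrc)) Ss₂[n] hT2
                rw [h2, heq]
          rw [hSs]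

end TESHelpers

/-! ## The split and restriction lemmas -/

section BigLemmas

variable {g g' : PreGraph V A L}

lemma srcSeq_append (l₁ l₂ : List (Trail V A)) :
    srcSeq (l₁ ++ l₂) = srcSeq l₁ ++ srcSeq l₂ := by
  simp [srcSeq]

lemma assemble {R : Trail V A → List (Trail V A) → Prop}
    (φ : A → List (Trail V A) → List (Trail V A))
    (hφ : ∀ ai Si, srcSeq (φ ai Si) = srcSeq Si) :
    ∀ (ars : List A) (Ss Ss₂ : List (List (Trail V A))),
      Ss.length = ars.length → Ss₂.length = ars.length →
      (∀ (i : ℕ) (ai : A) (Si Si₂ : List (Trail V A)), ars[i]? = some ai →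
          Ss[i]? = some Si → Ss₂[i]? = some Si₂ →
          ∃ T, List.Forall₂ R (φ ai Si) T ∧ srcSeq Si₂ = (T.map srcSeq).flatten) →
      ∃ Ts, List.Forall₂ R (List.zipWith φ ars Ss).flatten Ts ∧
        srcSeq (List.zipWith φ ars Ss₂).flatten = (Ts.map srcSeq).flatten := by
  intro ars
  induction ars with
  | nil =>
      intro Ss Ss₂ h1 h2 h3
      exact ⟨[], by simp, by simp [srcSeq]⟩
  | cons a0 ars ih =>
      intro Ss Ss₂ h1 h2 h3
      cases Ss with
      | nil => simp at h1
      | cons S0 Ss =>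
        cases Ss₂ with
        | nil => simp at h2
        | cons S0₂ Ss₂ =>
            obtain ⟨T0, hT0, hs0⟩ := h3 0 a0 S0 S0₂ (by simp) (by simp) (by simp)
            obtain ⟨Ts, hTs, hss⟩ := ih Ss Ss₂ (by simpa using h1) (by simpa using h2)
              (fun i ai Si Si₂ ha hb hc =>
                h3 (i+1) ai Si Si₂ (by simpa using ha) (by simpa using hb) (by simpa using hc))
            refine ⟨T0 ++ Ts, ?_, ?_⟩
            · rw [List.zipWith_cons_cons, List.flatten_cons]
              exact List.rel_append hT0 hTs
            · rw [List.zipWith_cons_cons, List.flatten_cons, srcSeq_append, hφ a0 S0₂,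
                hs0, hss, List.map_append, List.flatten_append]

lemma TES_split (hg : IsGraph g) (hg' : IsGraph g') (huni : UniStructured g)
    (hsubTk : g'.Tk ⊆ g.Tk) (hsubArr : g'.Arr ⊆ g.Arr) (hsubinc : g'.inc ⊆ g.inc)
    (hars_lift : ∀ (u : V) (ars : List A), u ∈ g'.Cf → InArrowSeq g' u ars →
        InArrowSeq g u ars)
    {tr : Trail V A} {TR' : List (Trail V A)} (hT' : TES g' tr TR') :
    tr.src ∈ g'.Tk → ∀ S, TES g tr S →
      ∃ Ts : List (List (Trail V A)),
        List.Forall₂ (fun w Tw => TES g (w.append tr) Tw) TR' Ts ∧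
        srcSeq S = (Ts.map srcSeq).flatten := by
  induction hT' with
  | nonext tr hne =>
      intro hsrc S hS
      refine ⟨[S], List.Forall₂.cons ?_ List.Forall₂.nil, by simp⟩
      have heq : (⟨[], tr.src, tr.src⟩ : Trail V A).append tr = tr := by
        cases tr; simp [Trail.append]
      rw [heq]; exact hS
  | ext tr a u ars Ss hext hinc hars hlen hrec ih =>
      intro hsrc S hS
      have hsrcg : tr.src ∈ g.Tk := hsubTk hsrc
      have hu' : u ∈ g'.Cf := cf_of_inc hg' hinc hsrc
      have harsg : InArrowSeq g u ars := hars_lift u ars hu' hars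
      cases hS with
      | nonext _ hneg =>
          exact absurd ⟨a, hsubArr hext.1, hext.2.1,
            hext.2.2.imp (fun s hs => hsubinc hs)⟩ hneg
      | ext _ a₂ u₂ ars₂ Ss₂ hext₂ hinc₂ hars₂ hlen₂ hrec₂ =>
          have ha : a₂ = a := huni tr.src hsrcg a₂ hext₂.1 a (hsubArr hext.1)
            hext₂.2.2 ⟨u, hsubinc hinc⟩
          subst ha
          have hu2 : u₂ = u := (Prod.ext_iff.1 (inc_unique hg hinc₂ (hsubinc hinc))).1
          subst hu2
          have hars2 : ars₂ = ars := inArrowSeq_unique hg hars₂ harsg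
          subst hars2
          refine assemble (R := fun w Tw => TES g (w.append tr) Tw)
            (fun ai Si => Si.map
              (fun e => (⟨e.arrows ++ [ai, a₂], e.src, tr.src⟩ : Trail V A)))
            (by intro ai Si; simp [srcSeq, Function.comp]) ars₂ Ss Ss₂ hlen hlen₂ ?_
          intro i ai Si Si₂ hia hSsi hSs₂i
          obtain ⟨haiA', si, hsi⟩ := (hars.2.1 ai).1 (List.mem_of_getElem? hia)
          have hsiTk' : si ∈ g'.Tk := tk_of_inc hg' hsi hu'
          have hT2 : TES g ⟨ai :: a₂ :: tr.arrows, si, tr.tgt⟩ Si₂ :=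
            hrec₂ i ai si Si₂ hia hSs₂i (hsubinc hsi)
          obtain ⟨Tsᵢ, hF, hsrcEq⟩ := ih i ai si Si hia hSsi hsi hsiTk' Si₂ hT2
          refine ⟨Tsᵢ, ?_, hsrcEq⟩
          rw [List.forall₂_map_left_iff]
          refine List.Forall₂.imp ?_ hF
          intro e Tw hTw
          have heq : (⟨e.arrows ++ [ai, a₂], e.src, tr.src⟩ : Trail V A).append tr
              = e.append ⟨ai :: a₂ :: tr.arrows, si, tr.tgt⟩ := by
            simp [Trail.append]
          rw [heq]; exact hTw

lemma TES_restrict (hg : IsGraph g)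
    (hneA : ∀ (u : V) (ars : List A), u ∈ g.Cf → InArrowSeq g u ars → ars ≠ [])
    {h : PreGraph V A L} {tr₀ : Trail V A}
    (hArr : h.Arr ⊆ g.Arr)
    (hincr : ∀ q : A × (V × V), q ∈ h.inc ↔ q ∈ g.inc ∧ q.1 ∈ h.Arr)
    (hiar : ∀ (x : A) (n : ℕ), (x, n) ∈ g.ia → x ∈ h.Arr → (x, n) ∈ h.ia)
    (hdisj : ∀ x ∈ h.Arr, x ∉ tr₀.arrows)
    {tr : Trail V A} {T : List (Trail V A)} (hT : TES g tr T) :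
    ∀ pre : List A, tr.arrows = pre ++ tr₀.arrows → tr.tgt = tr₀.tgt → tr.src ∈ g.Tk →
      (∀ x : A, (∃ w ∈ T, x ∈ w.arrows) → x ∈ h.Arr) →
      TES h ⟨pre, tr.src, tr₀.src⟩ T := by
  induction hT with
  | nonext tr hne =>
      intro pre hpre htgt hsrc hsub
      have hnext : NonExtendable h ⟨pre, tr.src, tr₀.src⟩ := by
        rintro ⟨a', ha'A, ha'nmem, s', hinc'⟩
        have hginc := ((hincr _).1 hinc').1
        refine hne ⟨a', hArr ha'A, ?_, ⟨s', hginc⟩⟩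
        rw [hpre]
        intro hmem
        rcases List.mem_append.1 hmem with hm | hm
        · exact ha'nmem hm
        · exact hdisj a' ha'A hm
      exact TES.nonext _ hnext
  | ext tr a u ars Ss hext hinc hars hlen hrec ih =>
      intro pre hpre htgt hsrc hsub
      have hu : u ∈ g.Cf := cf_of_inc hg hinc hsrc
      have hSne : ∀ (i : ℕ) (ai : A) (Si : List (Trail V A)),
          ars[i]? = some ai → Ss[i]? = some Si → Si ≠ [] := by
        intro i ai Si h1 h2
        obtain ⟨haiA, si, hsi⟩ := (hars.2.1 ai).1 (List.mem_of_getElem? h1)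
        exact TES_ne_nil hg hneA (hrec i ai si Si h1 h2 hsi) (tk_of_inc hg hsi hu)
      have hmemArr : ∀ (i : ℕ) (ai : A) (Si : List (Trail V A)),
          ars[i]? = some ai → Ss[i]? = some Si → ai ∈ h.Arr ∧ a ∈ h.Arr := by
        intro i ai Si h1 h2
        obtain ⟨e, he⟩ := List.exists_mem_of_ne_nil _ (hSne i ai Si h1 h2)
        have hwmem := tes_out_mem (a := a) (s := tr.src) h1 h2 he
        constructor
        · exact hsub ai ⟨_, hwmem, by simp⟩
        · exact hsub a ⟨_, hwmem, by simp⟩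
      have harsne : ars ≠ [] := hneA u ars hu hars
      have haH : a ∈ h.Arr := by
        cases h0 : ars with
        | nil => exact absurd h0 harsne
        | cons a0 ars' =>
            cases hS0 : Ss with
            | nil => rw [h0, hS0] at hlen; simp at hlen
            | cons S0 Ss' =>
                exact (hmemArr 0 a0 S0 (by rw [h0]; simp) (by rw [hS0]; simp)).2
      have hext_h : ExtendableBy h ⟨pre, tr.src, tr₀.src⟩ a := by
        refine ⟨haH, ?_, ⟨u, (hincr _).2 ⟨hinc, haH⟩⟩⟩
        intro hmem
        exact hext.2.1 (by rw [hpre]; exact List.mem_append_left _ hmem)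
      have harsH : ∀ (i : ℕ) (x : A), ars[i]? = some x → x ∈ h.Arr := by
        intro i x hx
        have hi : i < ars.length := lt_of_getElem?_some hx
        have hi2 : i < Ss.length := by rw [hlen]; exact hi
        exact (hmemArr i x Ss[i] hx (List.getElem?_eq_getElem hi2)).1
      have hars_h : InArrowSeq h u ars := by
        obtain ⟨nd, mem, idx⟩ := hars
        refine ⟨nd, fun x => ?_, fun i x hx => hiar _ _ (idx i x hx) (harsH i x hx)⟩
        constructor
        · intro hxm
          obtain ⟨j, hj⟩ := List.mem_iff_getElem?.1 hxm
          obtain ⟨hxA, w, hw⟩ := (mem x).1 hxm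
          exact ⟨harsH j x hj, w, (hincr _).2 ⟨hw, harsH j x hj⟩⟩
        · rintro ⟨hxA, w, hw⟩
          exact (mem x).2 ⟨hArr hxA, w, ((hincr _).1 hw).1⟩
      refine TES.ext _ a u ars Ss hext_h ((hincr _).2 ⟨hinc, haH⟩) hars_h hlen ?_
      intro i ai si Si h1 h2 hsiH
      have hsi : (ai, (si, u)) ∈ g.inc := ((hincr _).1 hsiH).1
      have hres := ih i ai si Si h1 h2 hsi (ai :: a :: pre)
        (by rw [hpre]; simp) htgt (tk_of_inc hg hsi hu)
        (fun x hx => by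
          obtain ⟨w, hwmem, hxw⟩ := hx
          exact hsub x ⟨_, tes_out_mem h1 h2 hwmem, by simp [hxw]⟩)
      exact hres

end BigLemmas

/-! ## Main theorem -/

section Main

variable {Cs : CSpace V A L} {g g' : PreGraph V A L}

lemma append_nil_trail {w : Trail V A} {t : V} (h : w.tgt = t) :
    w.append (Trail.nil t) = w := by
  cases w with
  | mk arr src tgt => cases h; simp [Trail.append, Trail.nil]

lemma trGraph_conditions (hg : IsGraph g) (TR : List (Trail V A))
    (hTRarr : ∀ x : A, (∃ w ∈ TR, x ∈ w.arrows) → x ∈ g.Arr) :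
    (trGraph g TR).Arr ⊆ g.Arr ∧
    (∀ q : A × (V × V), q ∈ (trGraph g TR).inc ↔ q ∈ g.inc ∧ q.1 ∈ (trGraph g TR).Arr) ∧
    (∀ (x : A) (n : ℕ), (x, n) ∈ g.ia → x ∈ (trGraph g TR).Arr → (x, n) ∈ (trGraph g TR).ia) ∧
    (∀ x : A, (∃ w ∈ TR, x ∈ w.arrows) → x ∈ (trGraph g TR).Arr) := by
  refine ⟨fun x hx => hx.1, ?_, ?_, ?_⟩
  · intro q
    constructor
    · intro hq
      exact ⟨hq.1, inc_arr hg hq.1, hq.2⟩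
    · intro hq
      exact ⟨hq.1, hq.2.2⟩
  · intro x n hx hxA
    exact ⟨hx, hxA.2⟩
  · intro x hx
    exact ⟨hTRarr x hx, hx⟩

theorem main_aux (hCs : IsCSpace Cs) {D : DTree V A L}
    {g : PreGraph V A L} {t : V} (hD : IsDecompositionOf Cs D g t) :
    ∀ ls : List (PreGraph V A L × V), LcsRel D ls →
    ∀ S : List (Trail V A), TES g (Trail.nil t) S →
    ∀ Fts : List (List V),
      List.Forall₂ (fun (p : PreGraph V A L × V) (F : List V) =>
        ∃ Si, TES p.1 (Trail.nil p.2) Si ∧ F = srcSeq Si) ls Fts →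
      srcSeq S = Fts.flatten := by
  induction hD with
  | single g t hc =>
      intro ls hl S hS Fts hF
      cases hl with
      | leaf =>
          cases hF with
          | cons hR hnil =>
              cases hnil
              obtain ⟨Si, hSi, rfl⟩ := hR
              have hgG : IsGraph g := hc.2.1.1
              have huni : UniStructured g := hc.2.2.2.2.2.1
              have htk : t ∈ g.Tk := hc.2.2.2.2.2.2.1
              have hdet := TES_det hgG huni hS htk Si hSi
              simp [hdet]
      | node _ _ _ lss hnecs hlenl hlcs => exact absurd rfl hnecs
  | split g t g' ics cs hc hsplit hlencs hrec ih =>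
      intro ls hl S hS Fts hF
      have hgG : IsGraph g := hc.2.1.1
      have hsgg : IsStructureGraph Cs.Ty Cs.le Cs.C Cs.sig g := hc.2.1
      have huni : UniStructured g := hc.2.2.2.2.2.1
      have htk : t ∈ g.Tk := hc.2.2.2.2.2.2.1
      have hneA : ∀ (u : V) (ars : List A), u ∈ g.Cf → InArrowSeq g u ars → ars ≠ [] :=
        fun u ars hu hars => sg_ars_ne_nil hCs hsgg hu hars
      have houtg : ∀ u ∈ g.Cf, ∀ a ∈ g.Arr, ∀ b ∈ g.Arr, ∀ w w' : V,
          (a, (u, w)) ∈ g.inc → (b, (u, w')) ∈ g.inc → a = b :=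
        fun u hu a ha b hb w w' hia hib => sg_out_unique hsgg hu ha hb hia hib
      obtain ⟨hc', hsub, trs, hTES', hlenics, hics⟩ := hsplit
      have hg'G : IsGraph g' := hc'.2.1.1
      have hsgg' : IsStructureGraph Cs.Ty Cs.le Cs.C Cs.sig g' := hc'.2.1
      have htk' : t ∈ g'.Tk := hc'.2.2.2.2.2.2.1
      have hneA' : ∀ (u : V) (ars : List A), u ∈ g'.Cf → InArrowSeq g' u ars → ars ≠ [] :=
        fun u ars hu hars => sg_ars_ne_nil hCs hsgg' hu hars
      have htrs_ne : trs ≠ [] := TES_ne_nil hg'G hneA' hTES' htk'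
      cases hl with
      | leaf =>
          have h1 : ics.length = 0 := by simpa using hlencs.symm
          have h0 : trs.length = 0 := by rw [← hlenics]; exact h1
          exact absurd (List.eq_nil_of_length_eq_zero h0) htrs_ne
      | node _ _ _ lss hnecs hlenl hlcs =>
          obtain ⟨Ftss, rfl, hFss⟩ := forall₂_flatten_left hF
          obtain ⟨hsTk, hsCf, hsArr, hsinc, hsia, hstl, hscl⟩ := hsub
          have hars_lift : ∀ (u : V) (ars : List A), u ∈ g'.Cf → InArrowSeq g' u ars →
              InArrowSeq g u ars := fun u ars hu hars =>
            subgraph_inArrowSeq hCs hsgg' hsgg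
              ⟨hsTk, hsCf, hsArr, hsinc, hsia, hstl, hscl⟩ hu hars
          obtain ⟨Ts, hTs, hsrcS⟩ := TES_split hgG hg'G huni hsTk hsArr hsinc hars_lift
            hTES' htk' S hS
          have hlTs : trs.length = Ts.length := hTs.length_eq
          have hlFtss : lss.length = Ftss.length := hFss.length_eq
          have hcomb : List.Forall₂ (fun (Tw : List (Trail V A)) (Fi : List (List V)) =>
              srcSeq Tw = Fi.flatten) Ts Ftss := by
            apply forall₂_of_getElem?
            · omega
            intro i Tw Fi hTsi hFssi
            have hiTs : i < Ts.length := lt_of_getElem?_some hTsi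
            have hitrs : i < trs.length := by rw [hlTs]; exact hiTs
            have htrsi : trs[i]? = some trs[i] := List.getElem?_eq_getElem hitrs
            obtain ⟨Si, hSi, hicsi⟩ := hics i trs[i] htrsi
            have hics_len : i < ics.length := by rw [hlenics]; exact hitrs
            have hicp : i < cs.length := by rw [hlencs]; exact hics_len
            have hcsi : cs[i]? = some cs[i] := List.getElem?_eq_getElem hicp
            have hilss : i < lss.length := by rw [hlenl]; exact hicp
            have hlssi : lss[i]? = some lss[i] := List.getElem?_eq_getElem hilss
            have hRel := forall₂_getElem hFss hlssi hFssi
            have htri := forall₂_getElem hTs htrsi hTsi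
            have htgt_i : (trs[i]).tgt = t := TES_tgt hTES' _ (List.mem_of_getElem? htrsi)
            rw [append_nil_trail htgt_i] at htri
            have hsrc_tk' : (trs[i]).src ∈ g'.Tk :=
              TES_src_tk hg'G hTES' htk' _ (List.mem_of_getElem? htrsi)
            have hsrc_tk : (trs[i]).src ∈ g.Tk := hsTk hsrc_tk'
            have hSieq : Si = Tw := TES_det hgG huni hSi hsrc_tk Tw htri
            rw [hSieq] at hicsi
            have hchain' : ChainIn g' (trs[i]).arrows (trs[i]).src t := by
              have := TES_chain hTES' rfl _ (List.mem_of_getElem? htrsi)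
              simpa [Trail.nil] using this
            have hchain : ChainIn g (trs[i]).arrows (trs[i]).src t :=
              chain_sub hsArr hsinc hchain'
            have hTward := TES_arrows hgG houtg htri hsrc_tk
              (by rw [htgt_i]; exact htk) (by rw [htgt_i]; exact hchain)
            have hTRarr : ∀ x : A, (∃ w ∈ Tw, x ∈ w.arrows) → x ∈ g.Arr := by
              rintro x ⟨w, hw, hx⟩
              exact (hTward w hw x hx).1
            obtain ⟨hcA, hcInc, hcIa, hcSub⟩ := trGraph_conditions hgG Tw hTRarr
            have hdisj : ∀ x ∈ (trGraph g Tw).Arr, x ∉ (trs[i]).arrows := by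
              intro x hx
              obtain ⟨w, hw, hxw⟩ := hx.2
              exact (hTward w hw x hxw).2
            have hchild : TES (trGraph g Tw) ⟨[], (trs[i]).src, (trs[i]).src⟩ Tw :=
              TES_restrict (tr₀ := trs[i]) hgG hneA hcA hcInc hcIa hdisj htri []
                (by simp) rfl hsrc_tk hcSub
            exact ih i cs[i] (trGraph g Tw) ((trs[i]).src) hcsi hicsi lss[i]
              (hlcs i cs[i] lss[i] hcsi hlssi) Tw hchild Fi hRel
          rw [hsrcS, map_eq_of_forall₂ hcomb, List.flatten_flatten]

end Main
/-- the foundation token-sequence of a construction is the concatenation of the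
foundation token-sequences of the constructions in the leaf construction-sequence of any of
its decompositions. -/
theorem decomposition_preserves_foundations {V A L : Type*}
    (Cs : CSpace V A L) (hCs : IsCSpace Cs)
    (g : PreGraph V A L) (t : V) (hc : IsConstruction Cs g t)
    (D : DTree V A L) (hD : IsDecompositionOf Cs D g t)
    (ls : List (PreGraph V A L × V)) (hl : LcsRel D ls)
    (S : List (Trail V A)) (hS : TES g (Trail.nil t) S)
    (Fts : List (List V)) (hlen : Fts.length = ls.length)
    (hFt : ∀ (i : ℕ) (gi : PreGraph V A L) (ti : V) (Fi : List V),
        ls[i]? = some (gi, ti) → Fts[i]? = some Fi →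
        ∃ Si, TES gi (Trail.nil ti) Si ∧ Fi = srcSeq Si) :
    srcSeq S = Fts.flatten := by
  have hforall : List.Forall₂ (fun (p : PreGraph V A L × V) (F : List V) =>
      ∃ Si, TES p.1 (Trail.nil p.2) Si ∧ F = srcSeq Si) ls Fts := by
    apply forall₂_of_getElem? hlen.symm
    intro i p F hp hF
    obtain ⟨gi, ti⟩ := p
    exact hFt i gi ti F hp hF
  exact main_aux hCs hD ls hl S hS Fts hforall

end RST
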